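/- For real numbers λ > b ≥ 0, μ and ε, (s_b(ε+μ) - μ)² - (s_λ(ε+μ) - μ)² ≤ (|ε| + b)² · I{|ε| > b}, where s_t(x) = sgn(x)(|x| - t)_+ is the soft threshold function. -/
import Mathlib


/-- Soft threshold s_t(x) = sgn(x)(|x|-t)_+. -/
noncomputable def soft (t x : ℝ) : ℝ := Real.sign x * max (|x| - t) 0

lemma soft_cases (t x : ℝ) :
    (0 < x ∧ soft t x = max (x - t) 0) ∨ (x = 0 ∧ soft t x = 0) ∨
      (x < 0 ∧ soft t x = -max (-x - t) 0) := by
  rcases lt_trichotomy x 0 with h | h | h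
  · right; right
    refine ⟨h, ?_⟩
    rw [soft, Real.sign_of_neg h, abs_of_neg h]; ring
  · right; left
    refine ⟨h, ?_⟩
    simp [soft, h]
  · left
    refine ⟨h, ?_⟩
    rw [soft, Real.sign_of_pos h, abs_of_pos h]; ring

lemma soft_dist (t x : ℝ) (ht : 0 ≤ t) : |soft t x - x| ≤ t := by
  rcases soft_cases t x with ⟨hx, hs⟩ | ⟨hx, hs⟩ | ⟨hx, hs⟩ <;> rw [hs] <;>
    rw [abs_le] <;> constructor <;>
    rcases le_total (x - t) 0 with h | h <;> rcases le_total (-x - t) 0 with h' | h' <;>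
    simp [max_eq_left, max_eq_right, *] <;> linarith

theorem stmt15 (lam b mu eps : ℝ) (hb : 0 ≤ b) (hbl : b < lam) :
    (soft b (eps + mu) - mu)^2 - (soft lam (eps + mu) - mu)^2 ≤
      if b < |eps| then (|eps| + b)^2 else 0 := by
  set x := eps + mu with hx
  by_cases h : b < |eps|
  · rw [if_pos h]
    have h1 : |soft b x - x| ≤ b := soft_dist b x hb
    have h2 : |soft b x - mu| ≤ |eps| + b := by
      have he : soft b x - mu = (soft b x - x) + eps := by rw [hx]; ring
      rw [he]
      calc |(soft b x - x) + eps| ≤ |soft b x - x| + |eps| := abs_add_le _ _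
        _ ≤ |eps| + b := by linarith
    have h3 : (soft b x - mu)^2 ≤ (|eps| + b)^2 := by
      nlinarith [abs_nonneg (soft b x - mu), sq_abs (soft b x - mu),
        abs_nonneg eps]
    nlinarith [sq_nonneg (soft lam x - mu)]
  · rw [if_neg h]
    have heps : |eps| ≤ b := le_of_not_gt h
    rw [abs_le] at heps
    have hmu : x - b ≤ mu ∧ mu ≤ x + b := by constructor <;> rw [hx] <;> linarith [heps.1, heps.2]
    rcases soft_cases b x with ⟨hxs, hsb⟩ | ⟨hxs, hsb⟩ | ⟨hxs, hsb⟩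
    · have hsl : soft lam x = max (x - lam) 0 := by
        rcases soft_cases lam x with ⟨_, h'⟩ | ⟨h', _⟩ | ⟨h', _⟩ <;> [exact h'; linarith; linarith]
      rw [hsb, hsl]
      rcases le_total (x - b) 0 with hc | hc <;> rcases le_total (x - lam) 0 with hc' | hc' <;>
        simp [max_eq_left, max_eq_right, hc, hc'] <;> nlinarith [hmu.1, hmu.2]
    · have hsl : soft lam x = 0 := by
        rcases soft_cases lam x with ⟨h', _⟩ | ⟨_, h'⟩ | ⟨h', _⟩ <;> [linarith; exact h'; linarith]
      rw [hsb, hsl]; linarith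
    · have hsl : soft lam x = -max (-x - lam) 0 := by
        rcases soft_cases lam x with ⟨h', _⟩ | ⟨h', _⟩ | ⟨_, h'⟩ <;> [linarith; linarith; exact h']
      rw [hsb, hsl]
      rcases le_total (-x - b) 0 with hc | hc <;> rcases le_total (-x - lam) 0 with hc' | hc' <;>
        simp [max_eq_left, max_eq_right, hc, hc'] <;> nlinarith [hmu.1, hmu.2]
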